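/- Let k be a strictly positive definite function on S and let T be a finite rooted tree defining a hierarchical partitioning of S: the root node 1 has S_1 = S, and for every nonleaf node i, S_i is the disjoint union of the subdomains S_l over the children l of i. For each nonleaf node i, let X̲_i be a set of r distinct points (landmark points) in S_i (so k(X̲_i,X̲_i) is invertible). Define recursively k_h^{(i)}(x,x') = k(x,x') if i is a leaf; k_h^{(i)}(x,x') = k_h^{(j)}(x,x') if x,x' ∈ S_j for a child j of i; and k_h^{(i)}(x,x') = ψ^{(i)}(x,X̲_i) k(X̲_i,X̲_i)^{-1} ψ^{(i)}(X̲_i,x') otherwise, where ψ^{(i)}(x,X̲_i) = k(x,X̲_i) if x lies in a leaf child j of i, and ψ^{(i)}(x,X̲_i) = ψ^{(j)}(x,X̲_j) k(X̲_j,X̲_j)^{-1} k(X̲_j,X̲_i) if x lies in a nonleaf child j of i. Set k_h = k_h^{(1)}. Then k_h is strictly positive definite on S. -/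

import Mathlib

open scoped RealInnerProductSpace Matrix


/-- The Gram matrix `k(X̲,X̲)` of a kernel `k` at the landmark points `u 0, …, u (r-1)`. -/
noncomputable def gramMatrix {S : Type*} (k : S → S → ℝ) {r : ℕ} (u : Fin r → S) :
    Matrix (Fin r) (Fin r) ℝ :=
  Matrix.of fun a b => k (u a) (u b)

/-- The Nyström approximation `k(x,X̲) k(X̲,X̲)⁻¹ k(X̲,x')`. -/
noncomputable def nystrom {S : Type*} (k : S → S → ℝ) {r : ℕ} (u : Fin r → S)
    (x x' : S) : ℝ :=
  ∑ a, ∑ b, k x (u a) * (gramMatrix k u)⁻¹ a b * k (u b) x'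

/-- A symmetric function `k : S × S → ℝ` is positive definite if every quadratic form
`∑ᵢⱼ αᵢ αⱼ k(xᵢ,xⱼ)` is nonnegative. -/
def IsPosDefKernel {S : Type*} (k : S → S → ℝ) : Prop :=
  (∀ x x', k x x' = k x' x) ∧
  ∀ (n : ℕ) (x : Fin n → S) (α : Fin n → ℝ),
    0 ≤ ∑ i, ∑ j, α i * α j * k (x i) (x j)

/-- A symmetric function `k : S × S → ℝ` is strictly positive definite if every quadratic
form `∑ᵢⱼ αᵢ αⱼ k(xᵢ,xⱼ)` at distinct points with not-all-zero coefficients is positive. -/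
def IsStrictPosDefKernel {S : Type*} (k : S → S → ℝ) : Prop :=
  (∀ x x', k x x' = k x' x) ∧
  ∀ (n : ℕ) (x : Fin n → S) (α : Fin n → ℝ),
    Function.Injective x → α ≠ 0 →
      0 < ∑ i, ∑ j, α i * α j * k (x i) (x j)


lemma psd_sum {S P : Type*} [Fintype P] {k : S → S → ℝ}
    (hk : IsStrictPosDefKernel k) (pt : P → S) (v : P → ℝ) :
    0 ≤ ∑ p, ∑ q, v p * v q * k (pt p) (pt q) := by
  classical
  set T : Finset S := Finset.image pt Finset.univ with hT
  have hmem : ∀ p, pt p ∈ T := fun p => Finset.mem_image_of_mem pt (Finset.mem_univ p)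
  set e := T.equivFin with he
  set g : P → Fin T.card := fun p => e ⟨pt p, hmem p⟩ with hg
  set y : Fin T.card → S := fun a => ((e.symm a : T) : S) with hy
  have hyg : ∀ p, y (g p) = pt p := fun p => by simp [hy, hg]
  have hyinj : Function.Injective y := by
    intro a b hab
    apply e.symm.injective
    exact Subtype.ext hab
  set w : Fin T.card → ℝ := fun a => ∑ p ∈ Finset.univ.filter (fun p => g p = a), v p with hw
  have H1 : ∀ f : S → ℝ, ∑ p, v p * f (pt p) = ∑ a, w a * f (y a) := by
    intro f
    rw [← Finset.sum_fiberwise Finset.univ g (fun p => v p * f (pt p))]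
    refine Finset.sum_congr rfl fun a _ => ?_
    rw [hw, Finset.sum_mul]
    refine Finset.sum_congr rfl fun p hp => ?_
    have hgp : g p = a := (Finset.mem_filter.mp hp).2
    rw [← hgp, hyg]
  have key : ∑ p, ∑ q, v p * v q * k (pt p) (pt q) = ∑ a, ∑ b, w a * w b * k (y a) (y b) := by
    calc ∑ p, ∑ q, v p * v q * k (pt p) (pt q)
        = ∑ p, v p * ((fun s => ∑ q, v q * k s (pt q)) (pt p)) := by
          refine Finset.sum_congr rfl fun p _ => ?_
          rw [Finset.mul_sum]
          exact Finset.sum_congr rfl fun q _ => by ring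
      _ = ∑ a, w a * (∑ q, v q * k (y a) (pt q)) := H1 (fun s => ∑ q, v q * k s (pt q))
      _ = ∑ a, w a * (∑ b, w b * k (y a) (y b)) := by
          refine Finset.sum_congr rfl fun a _ => ?_
          rw [H1 (fun s => k (y a) s)]
      _ = ∑ a, ∑ b, w a * w b * k (y a) (y b) := by
          refine Finset.sum_congr rfl fun a _ => ?_
          rw [Finset.mul_sum]
          exact Finset.sum_congr rfl fun b _ => by ring
  rw [key]
  by_cases hw0 : w = 0
  · simp [hw0]
  · exact le_of_lt (hk.2 _ y w hyinj hw0)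

open scoped MatrixOrder in
lemma exists_feature {S P : Type*} [Fintype P] {k : S → S → ℝ}
    (hk : IsStrictPosDefKernel k) (pt : P → S) :
    ∃ φ : P → EuclideanSpace ℝ P, ∀ p q, ⟪φ p, φ q⟫ = k (pt p) (pt q) := by
  classical
  set K : Matrix P P ℝ := Matrix.of fun p q => k (pt p) (pt q) with hK
  have hKsd : K.PosSemidef := by
    refine Matrix.PosSemidef.of_dotProduct_mulVec_nonneg ?_ ?_
    · ext p q
      simp only [Matrix.conjTranspose_apply, hK, Matrix.of_apply, star_trivial]
      exact hk.1 (pt q) (pt p)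
    · intro v
      have h := psd_sum hk pt v
      calc (0:ℝ) ≤ ∑ p, ∑ q, v p * v q * k (pt p) (pt q) := h
        _ = star v ⬝ᵥ (K *ᵥ v) := by
            simp only [dotProduct, Matrix.mulVec, star_trivial, hK, Matrix.of_apply,
              Finset.mul_sum, Pi.star_apply]
            exact Finset.sum_congr rfl fun p _ => Finset.sum_congr rfl fun q _ => by ring
  refine ⟨fun p => (WithLp.equiv 2 (P → ℝ)).symm (fun t => (CFC.sqrt K) t p), fun p q => ?_⟩
  have hherm : (CFC.sqrt K).IsHermitian := (Matrix.nonneg_iff_posSemidef.mp (CFC.sqrt_nonneg K)).1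
  calc ⟪(WithLp.equiv 2 (P → ℝ)).symm (fun t => (CFC.sqrt K) t p),
        (WithLp.equiv 2 (P → ℝ)).symm (fun t => (CFC.sqrt K) t q)⟫
      = ∑ t, (CFC.sqrt K) t p * (CFC.sqrt K) t q := by
        simp [PiLp.inner_apply, RCLike.inner_apply, PiLp.toLp_apply]
        exact Finset.sum_congr rfl fun _ _ => mul_comm _ _
    _ = ∑ t, (CFC.sqrt K) p t * (CFC.sqrt K) t q := by
        refine Finset.sum_congr rfl fun t _ => ?_
        congr 1
        conv_lhs => rw [← hherm.apply t p]
        simp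
    _ = ((CFC.sqrt K) * (CFC.sqrt K)) p q := (Matrix.mul_apply).symm
    _ = K p q := by rw [CFC.sqrt_mul_sqrt_self K hKsd.nonneg]
    _ = k (pt p) (pt q) := rfl

lemma gram_posdef {S : Type*} {k : S → S → ℝ} (hk : IsStrictPosDefKernel k)
    {r : ℕ} {u : Fin r → S} (hu : Function.Injective u) : (gramMatrix k u).PosDef := by
  refine Matrix.PosDef.of_dotProduct_mulVec_pos ?_ ?_
  · ext a b
    simp only [Matrix.conjTranspose_apply, gramMatrix, Matrix.of_apply, star_trivial]
    exact hk.1 (u b) (u a)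
  · intro v hv
    have h := hk.2 r u v hu hv
    calc (0:ℝ) < ∑ a, ∑ b, v a * v b * k (u a) (u b) := h
      _ = star v ⬝ᵥ (gramMatrix k u *ᵥ v) := by
          simp only [dotProduct, Matrix.mulVec, star_trivial, gramMatrix, Matrix.of_apply,
            Finset.mul_sum, Pi.star_apply]
          exact Finset.sum_congr rfl fun a _ => Finset.sum_congr rfl fun b _ => by ring

open scoped Classical in
noncomputable def omegaAux {ι P V : Type*} (Ch : ι → Finset ι) (depth : ι → ℕ)
    (child : ι → P → ι)
    (hd : ∀ i p, Ch i ≠ ∅ → depth (child i p) < depth i)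
    (φ : P → V) (proj : ι → V → V) (i : ι) (p : P) : V :=
  if h : Ch i = ∅ then φ p
  else proj i (omegaAux Ch depth child hd φ proj (child i p) p)
termination_by depth i
decreasing_by exact hd i p h

/-- the hierarchical covariance function `k_h = k_h^{(root)}`, built from a
strictly positive definite base kernel `k` via a finite rooted partitioning tree with
landmark sets `u i` of `r` distinct points in `Sᵢ` (so that the Gram matrices
`k(X̲ᵢ,X̲ᵢ)` are invertible), through the recursion
`k_h^{(i)} = k` on leaves, `k_h^{(i)} = k_h^{(j)}` on a common child subdomain `S_j`, and
`k_h^{(i)}(x,x') = ψ^{(i)}(x,X̲ᵢ) k(X̲ᵢ,X̲ᵢ)⁻¹ ψ^{(i)}(X̲ᵢ,x')` otherwise, where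
`ψ^{(i)}(x,X̲ᵢ) = k(x,X̲ᵢ)` for `x` in a leaf child and
`ψ^{(i)}(x,X̲ᵢ) = ψ^{(j)}(x,X̲ⱼ) k(X̲ⱼ,X̲ⱼ)⁻¹ k(X̲ⱼ,X̲ᵢ)` for `x` in a nonleaf child `j`,
is strictly positive definite on `S`. -/
theorem hierarchical_strictPosDef {S ι : Type*} [Fintype ι] (k : S → S → ℝ)
    (hk : IsStrictPosDefKernel k)
    (root : ι) (Ch : ι → Finset ι) (dom : ι → Set S) (depth : ι → ℕ)
    (hroot : dom root = Set.univ)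
    (hsub : ∀ i, ∀ j ∈ Ch i, dom j ⊆ dom i)
    (hcov : ∀ i, Ch i ≠ ∅ → ∀ x ∈ dom i, ∃ j ∈ Ch i, x ∈ dom j)
    (hdisj : ∀ i, ∀ j ∈ Ch i, ∀ l ∈ Ch i, j ≠ l → Disjoint (dom j) (dom l))
    (hparent_unique : ∀ i i' j, j ∈ Ch i → j ∈ Ch i' → i = i')
    (hroot_not_child : ∀ i, root ∉ Ch i)
    (hdepth : ∀ i, ∀ j ∈ Ch i, depth j < depth i)
    {r : ℕ} (u : ι → Fin r → S)
    (hu_mem : ∀ i, Ch i ≠ ∅ → ∀ a, u i a ∈ dom i)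
    (hu_inj : ∀ i, Ch i ≠ ∅ → Function.Injective (u i))
    (khi : ι → S → S → ℝ) (ψ : ι → S → Fin r → ℝ)
    (hkhi_leaf : ∀ i, Ch i = ∅ → ∀ x x', khi i x x' = k x x')
    (hkhi_child : ∀ i, ∀ j ∈ Ch i, ∀ x ∈ dom j, ∀ x' ∈ dom j, khi i x x' = khi j x x')
    (hkhi_cross : ∀ i, Ch i ≠ ∅ → ∀ x ∈ dom i, ∀ x' ∈ dom i,
      (¬ ∃ j ∈ Ch i, x ∈ dom j ∧ x' ∈ dom j) →
      khi i x x' = ∑ a, ∑ b, ψ i x a * (gramMatrix k (u i))⁻¹ a b * ψ i x' b)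
    (hψ_leaf : ∀ i, ∀ j ∈ Ch i, Ch j = ∅ → ∀ x ∈ dom j, ∀ a, ψ i x a = k x (u i a))
    (hψ_rec : ∀ i, ∀ j ∈ Ch i, Ch j ≠ ∅ → ∀ x ∈ dom j, ∀ a,
      ψ i x a = ∑ b, ∑ c, ψ j x b * (gramMatrix k (u j))⁻¹ b c * k (u j c) (u i a)) :
    IsStrictPosDefKernel (khi root) := by
  classical
  have hdepth0 : ∀ i, Ch i ≠ ∅ → 0 < depth i := by
    intro i h
    obtain ⟨j, hj⟩ := Finset.nonempty_iff_ne_empty.mpr h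
    exact lt_of_le_of_lt (Nat.zero_le _) (hdepth i j hj)
  have hGe : ∀ (i : ι) a b, (gramMatrix k (u i))⁻¹ a b = (gramMatrix k (u i))⁻¹ b a := by
    intro i a b
    have hGT : (gramMatrix k (u i))ᵀ = gramMatrix k (u i) := by
      ext a b
      exact hk.1 (u i b) (u i a)
    conv_lhs => rw [← hGT, ← Matrix.transpose_nonsing_inv]
    rw [Matrix.transpose_apply]
  constructor
  · -- symmetry
    have key : ∀ d i, depth i ≤ d → ∀ y ∈ dom i, ∀ y' ∈ dom i, khi i y y' = khi i y' y := by
      intro d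
      induction d with
      | zero =>
        intro i hd y hy y' hy'
        have hleaf : Ch i = ∅ := by
          by_contra h
          have := hdepth0 i h
          omega
        rw [hkhi_leaf i hleaf, hkhi_leaf i hleaf, hk.1]
      | succ d ih =>
        intro i hd y hy y' hy'
        by_cases hleaf : Ch i = ∅
        · rw [hkhi_leaf i hleaf, hkhi_leaf i hleaf, hk.1]
        · by_cases hboth : ∃ j ∈ Ch i, y ∈ dom j ∧ y' ∈ dom j
          · obtain ⟨j, hj, hyj, hy'j⟩ := hboth
            rw [hkhi_child i j hj y hyj y' hy'j, hkhi_child i j hj y' hy'j y hyj]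
            exact ih j (by have := hdepth i j hj; omega) y hyj y' hy'j
          · have hboth' : ¬ ∃ j ∈ Ch i, y' ∈ dom j ∧ y ∈ dom j := by
              rintro ⟨j, hj, h1, h2⟩
              exact hboth ⟨j, hj, h2, h1⟩
            rw [hkhi_cross i hleaf y hy y' hy' hboth, hkhi_cross i hleaf y' hy' y hy hboth']
            rw [Finset.sum_comm]
            refine Finset.sum_congr rfl fun a _ => Finset.sum_congr rfl fun b _ => ?_
            rw [hGe i a b]
            ring
    intro y y'
    exact key (depth root) root le_rfl y (by rw [hroot]; exact Set.mem_univ _)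
      y' (by rw [hroot]; exact Set.mem_univ _)
  · -- strict positivity
    intro n x α hxinj hα
    obtain ⟨pt, hpt1, hpt2⟩ : ∃ pt : (Fin n ⊕ ι × Fin r) → S,
        (∀ p, pt (Sum.inl p) = x p) ∧ (∀ j a, pt (Sum.inr (j, a)) = u j a) :=
      ⟨Sum.elim x fun q => u q.1 q.2, fun _ => rfl, fun _ _ => rfl⟩
    obtain ⟨φ, hφ⟩ := exists_feature hk pt
    have hGinv : ∀ i, Ch i ≠ ∅ →
        (gramMatrix k (u i))⁻¹ * gramMatrix k (u i) = 1 := by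
      intro i hi
      exact Matrix.nonsing_inv_mul _
        (isUnit_iff_ne_zero.mpr (gram_posdef hk (hu_inj i hi)).det_pos.ne')
    -- the projection maps
    obtain ⟨proj, hproj_apply⟩ :
        ∃ proj : ι → EuclideanSpace ℝ (Fin n ⊕ ι × Fin r) →ₗ[ℝ]
            EuclideanSpace ℝ (Fin n ⊕ ι × Fin r),
          ∀ i w, proj i w
            = ∑ a, ∑ b, ((gramMatrix k (u i))⁻¹ a b * ⟪φ (Sum.inr (i, a)), w⟫) •
                φ (Sum.inr (i, b)) := by
      refine ⟨fun i => ∑ a, ∑ b, (gramMatrix k (u i))⁻¹ a b •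
          ((innerSL ℝ (φ (Sum.inr (i, a)))).toLinearMap.smulRight (φ (Sum.inr (i, b)))),
        fun i w => ?_⟩
      simp [LinearMap.sum_apply, LinearMap.smul_apply, LinearMap.smulRight_apply,
        ContinuousLinearMap.coe_coe, innerSL_apply_apply, smul_smul]
    have hinner_proj : ∀ i (v w : EuclideanSpace ℝ (Fin n ⊕ ι × Fin r)),
        ⟪v, proj i w⟫ = ∑ a, ∑ b, ((gramMatrix k (u i))⁻¹ a b * ⟪φ (Sum.inr (i, a)), w⟫)
          * ⟪v, φ (Sum.inr (i, b))⟫ := by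
      intro i v w
      rw [hproj_apply]
      rw [inner_sum]
      refine Finset.sum_congr rfl fun a _ => ?_
      rw [inner_sum]
      refine Finset.sum_congr rfl fun b _ => ?_
      rw [real_inner_smul_right]
    have hproj_land : ∀ i, Ch i ≠ ∅ → ∀ (w : EuclideanSpace ℝ (Fin n ⊕ ι × Fin r)) d,
        ⟪φ (Sum.inr (i, d)), proj i w⟫ = ⟪φ (Sum.inr (i, d)), w⟫ := by
      intro i hi w d
      rw [hinner_proj]
      calc ∑ a, ∑ b, ((gramMatrix k (u i))⁻¹ a b * ⟪φ (Sum.inr (i, a)), w⟫)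
              * ⟪φ (Sum.inr (i, d)), φ (Sum.inr (i, b))⟫
          = ∑ a, (∑ b, (gramMatrix k (u i))⁻¹ a b * gramMatrix k (u i) b d)
              * ⟪φ (Sum.inr (i, a)), w⟫ := by
            refine Finset.sum_congr rfl fun a _ => ?_
            rw [Finset.sum_mul]
            refine Finset.sum_congr rfl fun b _ => ?_
            rw [hφ, hpt2, hpt2]
            have : k (u i d) (u i b) = gramMatrix k (u i) b d := hk.1 (u i d) (u i b)
            rw [this]
            ring
        _ = ∑ a, ((gramMatrix k (u i))⁻¹ * gramMatrix k (u i)) a d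
              * ⟪φ (Sum.inr (i, a)), w⟫ := by
            refine Finset.sum_congr rfl fun a _ => ?_
            rw [Matrix.mul_apply]
        _ = ⟪φ (Sum.inr (i, d)), w⟫ := by
            rw [hGinv i hi]
            simp [Matrix.one_apply]
    have hproj_proj : ∀ i, Ch i ≠ ∅ → ∀ v w,
        ⟪proj i v, proj i w⟫ = ⟪v, proj i w⟫ := by
      intro i hi v w
      rw [hinner_proj i v w, hinner_proj i (proj i v) w]
      refine Finset.sum_congr rfl fun a _ => Finset.sum_congr rfl fun b _ => ?_
      congr 1
      rw [real_inner_comm (φ (Sum.inr (i, b))) (proj i v), hproj_land i hi v b]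
      exact real_inner_comm _ _
    have hproj_base : ∀ i, Ch i ≠ ∅ → ∀ w,
        ⟪w - proj i w, w - proj i w⟫ = ⟪w, w⟫ - ⟪proj i w, proj i w⟫ := by
      intro i hi w
      have h := hproj_proj i hi w w
      have h2 := real_inner_sub_sub_self w (proj i w)
      have h3 : ⟪w, proj i w⟫ = ⟪proj i w, proj i w⟫ := h.symm
      linarith
    have hproj_le : ∀ i, Ch i ≠ ∅ → ∀ w, ⟪proj i w, proj i w⟫ ≤ ⟪w, w⟫ := by
      intro i hi w
      have h1 := hproj_base i hi w
      have h2 : (0:ℝ) ≤ ⟪w - proj i w, w - proj i w⟫ := real_inner_self_nonneg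
      linarith
    have hproj_eq : ∀ i, Ch i ≠ ∅ → ∀ w,
        ⟪w, w⟫ ≤ ⟪proj i w, proj i w⟫ → proj i w = w := by
      intro i hi w hw
      have h1 := hproj_base i hi w
      have h2 : (0:ℝ) ≤ ⟪w - proj i w, w - proj i w⟫ := real_inner_self_nonneg
      have h0 : ⟪w - proj i w, w - proj i w⟫ = 0 := by linarith
      have := inner_self_eq_zero.mp h0
      have := sub_eq_zero.mp this
      exact this.symm
    -- choice of child subdomains
    obtain ⟨child, hchild_mem, hchild_eq⟩ :
        ∃ child : ι → (Fin n ⊕ ι × Fin r) → ι,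
          (∀ i p, Ch i ≠ ∅ → child i p ∈ Ch i) ∧
          (∀ i p j, j ∈ Ch i → pt p ∈ dom j → child i p = j) := by
      refine ⟨fun i p => if h : ∃ j ∈ Ch i, pt p ∈ dom j then h.choose else
          if h2 : (Ch i).Nonempty then h2.choose else i, fun i p hne => ?_, fun i p j hj hpj => ?_⟩
      · by_cases h : ∃ j ∈ Ch i, pt p ∈ dom j
        · simp only [dif_pos h]
          exact h.choose_spec.1
        · simp only [dif_neg h, dif_pos (Finset.nonempty_iff_ne_empty.mpr hne)]
          exact (Finset.nonempty_iff_ne_empty.mpr hne).choose_spec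
      · have h : ∃ j' ∈ Ch i, pt p ∈ dom j' := ⟨j, hj, hpj⟩
        simp only [dif_pos h]
        by_contra hne2
        exact absurd hpj
          (Set.disjoint_left.mp (hdisj i h.choose h.choose_spec.1 j hj hne2) h.choose_spec.2)
    have hchild_dom : ∀ i p, Ch i ≠ ∅ → pt p ∈ dom i → pt p ∈ dom (child i p) := by
      intro i p hne hp
      obtain ⟨j, hj, hpj⟩ := hcov i hne (pt p) hp
      rw [hchild_eq i p j hj hpj]
      exact hpj
    have hd' : ∀ i p, Ch i ≠ ∅ → depth (child i p) < depth i :=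
      fun i p h => hdepth i _ (hchild_mem i p h)
    -- the recursive feature maps
    obtain ⟨ω, hωleaf, hωnode⟩ :
        ∃ ω : ι → (Fin n ⊕ ι × Fin r) → EuclideanSpace ℝ (Fin n ⊕ ι × Fin r),
          (∀ i p, Ch i = ∅ → ω i p = φ p) ∧
          (∀ i p, Ch i ≠ ∅ → ω i p = proj i (ω (child i p) p)) :=
      ⟨omegaAux Ch depth child hd' φ (fun i v => proj i v),
       fun i p h => by rw [omegaAux, dif_pos h],
       fun i p h => by rw [omegaAux, dif_neg h]⟩
    -- the ψ representation
    have hψleafcase : ∀ j, Ch j = ∅ → ∀ i (p : Fin n ⊕ ι × Fin r), j ∈ Ch i →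
        pt p ∈ dom j → ∀ a, ψ i (pt p) a = ⟪ω j p, φ (Sum.inr (i, a))⟫ := by
      intro j hj i p hji hp a
      rw [hψ_leaf i j hji hj (pt p) hp a, hωleaf j p hj, hφ, hpt2]
    have hψω : ∀ d j, depth j ≤ d → ∀ i (p : Fin n ⊕ ι × Fin r), j ∈ Ch i →
        pt p ∈ dom j → ∀ a, ψ i (pt p) a = ⟪ω j p, φ (Sum.inr (i, a))⟫ := by
      intro d
      induction d with
      | zero =>
        intro j hdj i p hji hp a
        have hjl : Ch j = ∅ := by
          by_contra h
          have := hdepth0 j h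
          omega
        exact hψleafcase j hjl i p hji hp a
      | succ d ih =>
        intro j hdj i p hji hp a
        by_cases hjl : Ch j = ∅
        · exact hψleafcase j hjl i p hji hp a
        · obtain ⟨l, hl, hpl⟩ := hcov j hjl (pt p) hp
          have hcl : child j p = l := hchild_eq j p l hl hpl
          have hdl : depth l ≤ d := by have := hdepth j l hl; omega
          rw [hψ_rec i j hji hjl (pt p) hp a, hωnode j p hjl, hcl]
          rw [real_inner_comm, hinner_proj]
          refine Finset.sum_congr rfl fun b _ => Finset.sum_congr rfl fun c _ => ?_
          rw [hφ, hpt2, hpt2, hk.1 (u i a) (u j c)]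
          rw [real_inner_comm (ω l p) (φ (Sum.inr (j, b)))]
          rw [← ih l hdl j p hl hpl b]
          ring
    -- the cross identity
    have hcross : ∀ i, Ch i ≠ ∅ → ∀ p q : Fin n ⊕ ι × Fin r, pt p ∈ dom i → pt q ∈ dom i →
        child i p ≠ child i q → khi i (pt p) (pt q) = ⟪ω i p, ω i q⟫ := by
      intro i hi p q hp hq hneq
      have hcp : pt p ∈ dom (child i p) := hchild_dom i p hi hp
      have hcq : pt q ∈ dom (child i q) := hchild_dom i q hi hq
      have hcpm : child i p ∈ Ch i := hchild_mem i p hi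
      have hcqm : child i q ∈ Ch i := hchild_mem i q hi
      have hnot : ¬ ∃ j ∈ Ch i, pt p ∈ dom j ∧ pt q ∈ dom j := by
        rintro ⟨j, hj, h1, h2⟩
        exact hneq ((hchild_eq i p j hj h1).trans (hchild_eq i q j hj h2).symm)
      rw [hkhi_cross i hi (pt p) hp (pt q) hq hnot, hωnode i p hi, hωnode i q hi,
        hproj_proj i hi, hinner_proj]
      rw [Finset.sum_comm]
      refine Finset.sum_congr rfl fun a _ => Finset.sum_congr rfl fun b _ => ?_
      rw [real_inner_comm (ω (child i q) q) (φ (Sum.inr (i, a)))]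
      rw [← hψω (depth (child i q)) (child i q) le_rfl i q hcqm hcq a]
      rw [← hψω (depth (child i p)) (child i p) le_rfl i p hcpm hcp b]
      rw [hGe i a b]
      ring
    -- inner product expansion
    have hexp : ∀ (c : Fin n → ℝ) (w : Fin n → EuclideanSpace ℝ (Fin n ⊕ ι × Fin r)),
        ⟪∑ p, c p • w p, ∑ p, c p • w p⟫ = ∑ p, ∑ q, c p * c q * ⟪w p, w q⟫ := by
      intro c w
      rw [sum_inner]
      refine Finset.sum_congr rfl fun p _ => ?_
      rw [real_inner_smul_left, inner_sum, Finset.mul_sum]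
      refine Finset.sum_congr rfl fun q _ => ?_
      rw [real_inner_smul_right]
      ring
    -- leaf case of the main induction
    have leafcase : ∀ i, Ch i = ∅ → ∀ β : Fin n → ℝ,
        ⟪∑ p, β p • ω i (Sum.inl p), ∑ p, β p • ω i (Sum.inl p)⟫
          ≤ ∑ p, ∑ q, β p * β q * khi i (x p) (x q) ∧
        ((∑ p, ∑ q, β p * β q * khi i (x p) (x q))
            ≤ ⟪∑ p, β p • ω i (Sum.inl p), ∑ p, β p • ω i (Sum.inl p)⟫ →
          (∑ p, β p • φ (Sum.inl p)) = ∑ p, β p • ω i (Sum.inl p)) := by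
      intro i hi β
      have h1 : (∑ p, β p • ω i (Sum.inl p)) = ∑ p, β p • φ (Sum.inl p) :=
        Finset.sum_congr rfl fun p _ => by rw [hωleaf i (Sum.inl p) hi]
      have h2 : ∑ p, ∑ q, β p * β q * khi i (x p) (x q)
          = ⟪∑ p, β p • φ (Sum.inl p), ∑ p, β p • φ (Sum.inl p)⟫ := by
        rw [hexp]
        refine Finset.sum_congr rfl fun p _ => Finset.sum_congr rfl fun q _ => ?_
        rw [hkhi_leaf i hi (x p) (x q), hφ, hpt1, hpt1]
      exact ⟨by rw [h1, h2], fun _ => by rw [h1]⟩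
    -- main induction on depth
    have main : ∀ d i, depth i ≤ d → ∀ β : Fin n → ℝ, (∀ p, β p ≠ 0 → x p ∈ dom i) →
        ⟪∑ p, β p • ω i (Sum.inl p), ∑ p, β p • ω i (Sum.inl p)⟫
          ≤ ∑ p, ∑ q, β p * β q * khi i (x p) (x q) ∧
        ((∑ p, ∑ q, β p * β q * khi i (x p) (x q))
            ≤ ⟪∑ p, β p • ω i (Sum.inl p), ∑ p, β p • ω i (Sum.inl p)⟫ →
          (∑ p, β p • φ (Sum.inl p)) = ∑ p, β p • ω i (Sum.inl p)) := by
      intro d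
      induction d with
      | zero =>
        intro i hdi β hβ
        have hleaf : Ch i = ∅ := by
          by_contra h
          have := hdepth0 i h
          omega
        exact leafcase i hleaf β
      | succ d ih =>
        intro i hdi β hβ
        by_cases hne : Ch i = ∅
        · exact leafcase i hne β
        · obtain ⟨B, hBdef⟩ : ∃ B : ι → Fin n → ℝ,
              ∀ j p, B j p = if child i (Sum.inl p) = j then β p else 0 :=
            ⟨_, fun _ _ => rfl⟩
          have hxdom : ∀ p, β p ≠ 0 → x p ∈ dom (child i (Sum.inl p)) := by
            intro p hbp
            have h := hchild_dom i (Sum.inl p) hne (by rw [hpt1]; exact hβ p hbp)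
            rwa [hpt1] at h
          have hcmem : ∀ p : Fin n, child i (Sum.inl p) ∈ Ch i :=
            fun p => hchild_mem i _ hne
          have hBsup : ∀ j p, B j p ≠ 0 →
              x p ∈ dom j ∧ β p ≠ 0 ∧ child i (Sum.inl p) = j := by
            intro j p h0
            rw [hBdef] at h0
            by_cases hcp : child i (Sum.inl p) = j
            · rw [if_pos hcp] at h0
              exact ⟨hcp ▸ hxdom p h0, h0, hcp⟩
            · rw [if_neg hcp] at h0
              exact absurd rfl h0
          have stepA : ∀ p q, β p * β q * khi i (x p) (x q)
              = β p * β q * ⟪ω i (Sum.inl p), ω i (Sum.inl q)⟫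
                + ∑ j ∈ Ch i, B j p * B j q *
                    (khi j (x p) (x q) - ⟪ω i (Sum.inl p), ω i (Sum.inl q)⟫) := by
            intro p q
            by_cases hbp : β p = 0
            · simp [hBdef, hbp]
            by_cases hbq : β q = 0
            · simp [hBdef, hbq]
            have hxp := hxdom p hbp
            have hxq := hxdom q hbq
            by_cases hcc : child i (Sum.inl p) = child i (Sum.inl q)
            · have hkc : khi i (x p) (x q) = khi (child i (Sum.inl p)) (x p) (x q) :=
                hkhi_child i _ (hcmem p) (x p) hxp (x q) (by rw [hcc]; exact hxq)
              have hsum : ∑ j ∈ Ch i, B j p * B j q *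
                    (khi j (x p) (x q) - ⟪ω i (Sum.inl p), ω i (Sum.inl q)⟫)
                  = β p * β q * (khi (child i (Sum.inl p)) (x p) (x q)
                      - ⟪ω i (Sum.inl p), ω i (Sum.inl q)⟫) := by
                rw [Finset.sum_eq_single (child i (Sum.inl p))]
                · rw [hBdef, hBdef, if_pos rfl, if_pos hcc.symm]
                · intro j _ hjne
                  rw [hBdef, if_neg fun h => hjne h.symm]
                  ring
                · intro habs
                  exact absurd (hcmem p) habs
              rw [hkc, hsum]
              ring
            · have hkc := hcross i hne (Sum.inl p) (Sum.inl q)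
                (by rw [hpt1]; exact hβ p hbp) (by rw [hpt1]; exact hβ q hbq) hcc
              rw [hpt1, hpt1] at hkc
              have hsum : ∑ j ∈ Ch i, B j p * B j q *
                    (khi j (x p) (x q) - ⟪ω i (Sum.inl p), ω i (Sum.inl q)⟫) = 0 := by
                refine Finset.sum_eq_zero fun j _ => ?_
                by_cases h1 : child i (Sum.inl p) = j
                · have h2 : child i (Sum.inl q) ≠ j := fun h => hcc (h1.trans h.symm)
                  rw [hBdef j q, if_neg h2]
                  ring
                · rw [hBdef j p, if_neg h1]
                  ring
              rw [hkc, hsum]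
              ring
          have hTj : ∀ j, (∑ p, B j p • ω i (Sum.inl p))
              = proj i (∑ p, B j p • ω j (Sum.inl p)) := by
            intro j
            rw [map_sum]
            refine Finset.sum_congr rfl fun p _ => ?_
            by_cases h0 : B j p = 0
            · rw [h0]
              simp
            · obtain ⟨hxj, hbp, hcp⟩ := hBsup j p h0
              rw [map_smul, hωnode i (Sum.inl p) hne, hcp]
          have hsplit : ∑ p, ∑ q, β p * β q * khi i (x p) (x q)
              = ⟪∑ p, β p • ω i (Sum.inl p), ∑ p, β p • ω i (Sum.inl p)⟫
                + ∑ j ∈ Ch i,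
                  ((∑ p, ∑ q, B j p * B j q * khi j (x p) (x q))
                    - ⟪proj i (∑ p, B j p • ω j (Sum.inl p)),
                        proj i (∑ p, B j p • ω j (Sum.inl p))⟫) := by
            calc ∑ p, ∑ q, β p * β q * khi i (x p) (x q)
                = ∑ p, ∑ q, (β p * β q * ⟪ω i (Sum.inl p), ω i (Sum.inl q)⟫
                    + ∑ j ∈ Ch i, B j p * B j q *
                        (khi j (x p) (x q) - ⟪ω i (Sum.inl p), ω i (Sum.inl q)⟫)) :=
                  Finset.sum_congr rfl fun p _ => Finset.sum_congr rfl fun q _ => stepA p q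
              _ = (∑ p, ∑ q, β p * β q * ⟪ω i (Sum.inl p), ω i (Sum.inl q)⟫)
                  + ∑ p, ∑ q, ∑ j ∈ Ch i, B j p * B j q *
                      (khi j (x p) (x q) - ⟪ω i (Sum.inl p), ω i (Sum.inl q)⟫) := by
                  simp only [Finset.sum_add_distrib]
              _ = ⟪∑ p, β p • ω i (Sum.inl p), ∑ p, β p • ω i (Sum.inl p)⟫
                  + ∑ j ∈ Ch i, ∑ p, ∑ q, B j p * B j q *
                      (khi j (x p) (x q) - ⟪ω i (Sum.inl p), ω i (Sum.inl q)⟫) := by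
                  congr 1
                  · exact (hexp β _).symm
                  · calc ∑ p, ∑ q, ∑ j ∈ Ch i, B j p * B j q *
                          (khi j (x p) (x q) - ⟪ω i (Sum.inl p), ω i (Sum.inl q)⟫)
                        = ∑ p, ∑ j ∈ Ch i, ∑ q, B j p * B j q *
                          (khi j (x p) (x q) - ⟪ω i (Sum.inl p), ω i (Sum.inl q)⟫) :=
                        Finset.sum_congr rfl fun p _ => Finset.sum_comm
                      _ = ∑ j ∈ Ch i, ∑ p, ∑ q, B j p * B j q *
                          (khi j (x p) (x q) - ⟪ω i (Sum.inl p), ω i (Sum.inl q)⟫) :=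
                        Finset.sum_comm
              _ = ⟪∑ p, β p • ω i (Sum.inl p), ∑ p, β p • ω i (Sum.inl p)⟫
                  + ∑ j ∈ Ch i,
                    ((∑ p, ∑ q, B j p * B j q * khi j (x p) (x q))
                      - ⟪proj i (∑ p, B j p • ω j (Sum.inl p)),
                          proj i (∑ p, B j p • ω j (Sum.inl p))⟫) := by
                  congr 1
                  refine Finset.sum_congr rfl fun j hj => ?_
                  rw [← hTj j, hexp (B j) (fun p => ω i (Sum.inl p))]
                  simp only [mul_sub, Finset.sum_sub_distrib]
          have hdj : ∀ j ∈ Ch i, depth j ≤ d := by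
            intro j hj
            have := hdepth i j hj
            omega
          have hterm := fun j (hj : j ∈ Ch i) =>
            ih j (hdj j hj) (B j) (fun p h0 => (hBsup j p h0).1)
          have hnonneg : ∀ j ∈ Ch i, 0 ≤
              (∑ p, ∑ q, B j p * B j q * khi j (x p) (x q))
                - ⟪proj i (∑ p, B j p • ω j (Sum.inl p)),
                    proj i (∑ p, B j p • ω j (Sum.inl p))⟫ := by
            intro j hj
            have h1 := (hterm j hj).1
            have h2 := hproj_le i hne (∑ p, B j p • ω j (Sum.inl p))
            linarith
          constructor
          · rw [hsplit]
            have := Finset.sum_nonneg hnonneg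
            linarith
          · intro hle
            rw [hsplit] at hle
            have hsum0 : ∑ j ∈ Ch i,
                ((∑ p, ∑ q, B j p * B j q * khi j (x p) (x q))
                  - ⟪proj i (∑ p, B j p • ω j (Sum.inl p)),
                      proj i (∑ p, B j p • ω j (Sum.inl p))⟫) = 0 :=
              le_antisymm (by linarith) (Finset.sum_nonneg hnonneg)
            have hzero := (Finset.sum_eq_zero_iff_of_nonneg hnonneg).mp hsum0
            have hkey : ∀ j ∈ Ch i,
                proj i (∑ p, B j p • ω j (Sum.inl p)) = (∑ p, B j p • ω j (Sum.inl p)) ∧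
                (∑ p, B j p • φ (Sum.inl p)) = ∑ p, B j p • ω j (Sum.inl p) := by
              intro j hj
              have h0 := hzero j hj
              have h1 := (hterm j hj).1
              have h2 := hproj_le i hne (∑ p, B j p • ω j (Sum.inl p))
              have e1 : proj i (∑ p, B j p • ω j (Sum.inl p))
                  = ∑ p, B j p • ω j (Sum.inl p) :=
                hproj_eq i hne _ (by linarith)
              exact ⟨e1, (hterm j hj).2 (by linarith)⟩
            have hβdec : ∀ p, ∑ j ∈ Ch i, B j p = β p := by
              intro p
              have : ∀ j, B j p = if child i (Sum.inl p) = j then β p else 0 :=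
                fun j => hBdef j p
              simp only [this]
              rw [Finset.sum_ite_eq (Ch i) (child i (Sum.inl p)) fun _ => β p,
                if_pos (hcmem p)]
            calc ∑ p, β p • φ (Sum.inl p)
                = ∑ p, ∑ j ∈ Ch i, B j p • φ (Sum.inl p) := by
                  refine Finset.sum_congr rfl fun p _ => ?_
                  rw [← hβdec p, Finset.sum_smul]
              _ = ∑ j ∈ Ch i, ∑ p, B j p • φ (Sum.inl p) := Finset.sum_comm
              _ = ∑ j ∈ Ch i, (∑ p, B j p • ω j (Sum.inl p)) :=
                  Finset.sum_congr rfl fun j hj => (hkey j hj).2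
              _ = ∑ j ∈ Ch i, proj i (∑ p, B j p • ω j (Sum.inl p)) :=
                  Finset.sum_congr rfl fun j hj => ((hkey j hj).1).symm
              _ = ∑ j ∈ Ch i, ∑ p, B j p • ω i (Sum.inl p) :=
                  Finset.sum_congr rfl fun j _ => (hTj j).symm
              _ = ∑ p, ∑ j ∈ Ch i, B j p • ω i (Sum.inl p) := Finset.sum_comm
              _ = ∑ p, β p • ω i (Sum.inl p) := by
                  refine Finset.sum_congr rfl fun p _ => ?_
                  rw [← Finset.sum_smul, hβdec p]
    -- conclusion
    obtain ⟨h1, h2⟩ := main (depth root) root le_rfl α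
      (fun p _ => by rw [hroot]; exact Set.mem_univ _)
    by_contra hcon
    push_neg at hcon
    have h0 : (0:ℝ) ≤ ⟪∑ p, α p • ω root (Sum.inl p), ∑ p, α p • ω root (Sum.inl p)⟫ :=
      real_inner_self_nonneg
    have h3 := h2 (le_trans hcon h0)
    have h4 : ⟪∑ p, α p • ω root (Sum.inl p), ∑ p, α p • ω root (Sum.inl p)⟫ = 0 :=
      le_antisymm (le_trans h1 hcon) h0
    have h5 : (∑ p, α p • ω root (Sum.inl p)) = 0 := inner_self_eq_zero.mp h4
    have h6 : (∑ p, α p • φ (Sum.inl p))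
        = (0 : EuclideanSpace ℝ (Fin n ⊕ ι × Fin r)) := by rw [h3, h5]
    have h7 : ∑ p, ∑ q, α p * α q * k (x p) (x q) = 0 := by
      calc ∑ p, ∑ q, α p * α q * k (x p) (x q)
          = ⟪∑ p, α p • φ (Sum.inl p), ∑ p, α p • φ (Sum.inl p)⟫ := by
            rw [hexp]
            refine Finset.sum_congr rfl fun p _ => Finset.sum_congr rfl fun q _ => ?_
            rw [hφ, hpt1, hpt1]
        _ = 0 := by rw [h6]; simp
    have := hk.2 n x α hxinj hα
    linarith
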